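/- (Full row rank of U in the dressing construction.) Let S ∈ 𝔽₂^{n_N×n} satisfy S Sᵀ = E_{n_N}. Let K ⊆ 𝔽₂^{n_N} be a subspace and W ⊆ 𝔽₂^n a subspace such that K·S ∩ W ⊆ (rs G_0)·S, where G_0 ∈ 𝔽₂^{g_0×n_N} has all its rows in K. Let G_2 ∈ 𝔽₂^{g_2×n_N} have all its rows in K, and suppose the rows of the stacked matrix (G_0; G_2) are linearly independent. Suppose J_C ∈ 𝔽₂^{(k−q)×n}, U ∈ 𝔽₂^{g_2×(k−q)}, and M ∈ 𝔽₂^{g_2×n} satisfy G_2 S = U J_C + M with every row of M in W, and x U = 0 implies x M ∈ W for all x (which holds automatically). Then U has linearly independent rows; that is, for every x ∈ 𝔽₂^{g_2}, x U = 0 implies x = 0. -/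

import Mathlib

open Matrix

lemma vecMul_sum' {m k : ℕ} (x : Fin m → ZMod 2)
    (A : Matrix (Fin m) (Fin k) (ZMod 2)) :
    Matrix.vecMul x A = ∑ i, x i • A i := by
  ext j
  simp [Matrix.vecMul, dotProduct, Finset.sum_apply]

/-- The row space (𝔽₂-span of the rows) of a matrix. -/
def rowSpan {ι κ : Type*} (A : Matrix ι κ (ZMod 2)) :
    Submodule (ZMod 2) (κ → ZMod 2) :=
  Submodule.span (ZMod 2) (Set.range A)

/-- full row rank of `U` in the dressing construction. Here `K` plays
the role of `ker H_N`, `W` the role of `rs H_Z ⊕ rs F_Z`, `J_C` the role of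
`J_{Z,C}`, and `S` the pasting matrix `S_N` with orthonormal rows
(`S Sᵀ = E_{n_N}`). -/
theorem dressing_U_full_row_rank {nN n g0 g2 pk : ℕ}
    (S : Matrix (Fin nN) (Fin n) (ZMod 2))
    (hS : S * Sᵀ = 1)
    (K : Submodule (ZMod 2) (Fin nN → ZMod 2))
    (W : Submodule (ZMod 2) (Fin n → ZMod 2))
    (G0 : Matrix (Fin g0) (Fin nN) (ZMod 2))
    (hG0 : ∀ i, G0 i ∈ K)
    (hKW : Submodule.map S.vecMulLinear K ⊓ W ≤
      Submodule.map S.vecMulLinear (rowSpan G0))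
    (G2 : Matrix (Fin g2) (Fin nN) (ZMod 2))
    (hG2 : ∀ i, G2 i ∈ K)
    (hli : LinearIndependent (ZMod 2) (Sum.elim G0 G2))
    (JC : Matrix (Fin pk) (Fin n) (ZMod 2))
    (U : Matrix (Fin g2) (Fin pk) (ZMod 2))
    (M : Matrix (Fin g2) (Fin n) (ZMod 2))
    (hGSM : G2 * S = U * JC + M)
    (hM : ∀ i, M i ∈ W)
    (hauto : ∀ x : Fin g2 → ZMod 2, vecMul x U = 0 → vecMul x M ∈ W) :
    ∀ x : Fin g2 → ZMod 2, vecMul x U = 0 → x = 0 := by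
  intro x hx
  have hxK : vecMul x G2 ∈ K := by
    rw [vecMul_sum']
    exact Submodule.sum_mem _ fun i _ => Submodule.smul_mem _ _ (hG2 i)
  have h1 : vecMul (vecMul x G2) S = vecMul x M := by
    calc vecMul (vecMul x G2) S = vecMul x (G2 * S) := vecMul_vecMul x G2 S
      _ = vecMul x (U * JC) + vecMul x M := by rw [hGSM, vecMul_add]
      _ = vecMul x M := by rw [← vecMul_vecMul, hx, zero_vecMul, zero_add]
  have hmem : vecMul (vecMul x G2) S ∈
      Submodule.map S.vecMulLinear K ⊓ W := by
    constructor
    · exact ⟨vecMul x G2, hxK, by simp [vecMulLinear_apply]⟩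
    · rw [h1]; exact hauto x hx
  obtain ⟨w, hw, hwS⟩ := hKW hmem
  have hcancel : ∀ v : Fin nN → ZMod 2, vecMul (vecMul v S) Sᵀ = v := by
    intro v; rw [vecMul_vecMul, hS, vecMul_one]
  have hw2 : w = vecMul x G2 := by
    have h := congrArg (fun u => vecMul u Sᵀ) hwS
    simp only [vecMulLinear_apply] at h
    rwa [hcancel, hcancel] at h
  obtain ⟨y, hy⟩ := (Submodule.mem_span_range_iff_exists_fun (ZMod 2)).mp hw
  have hsum : ∑ i : Fin g0 ⊕ Fin g2,
      Sum.elim y x i • Sum.elim G0 G2 i = 0 := by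
    rw [Fintype.sum_sum_type]
    simp only [Sum.elim_inl, Sum.elim_inr]
    change ∑ a₁, y a₁ • G0 a₁ + ∑ a₂, x a₂ • G2 a₂ = 0
    have h2 : ∑ i, x i • G2 i = w := by rw [hw2, vecMul_sum']
    rw [hy, h2]
    funext j
    exact CharTwo.add_self_eq_zero (w j)
  have := Fintype.linearIndependent_iff.mp hli (Sum.elim y x) hsum
  funext j
  simpa using this (Sum.inr j)
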